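/- Suppose a DNA sequence of length G contains exactly k repeats whose positions are, conditionally, a uniformly random non-crossing structure in the sense of the Catalan-number model of Arratia et al. Then the probability that no two pairs of repeats are interleaved equals 2^k/(k+1)!. -/

import Mathlib

open Finset

/-- A perfect matching of the finite set `s` of naturals, encoded as a finset of ordered pairs. -/
def IsM (s : Finset ℕ) (m : Finset (ℕ × ℕ)) : Prop :=
  (∀ p ∈ m, p.1 < p.2 ∧ p.1 ∈ s ∧ p.2 ∈ s) ∧
  (∀ x ∈ s, ∃ p ∈ m, p.1 = x ∨ p.2 = x) ∧
  (∀ p ∈ m, ∀ q ∈ m, p ≠ q → p.1 ≠ q.1 ∧ p.1 ≠ q.2 ∧ p.2 ≠ q.1 ∧ p.2 ≠ q.2)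

instance (s : Finset ℕ) : DecidablePred (IsM s) := fun _ => by unfold IsM; infer_instance

def matchSet (s : Finset ℕ) : Finset (Finset (ℕ × ℕ)) :=
  (s ×ˢ s).powerset.filter (IsM s)

def Cross (m : Finset (ℕ × ℕ)) : Prop :=
  ∃ p ∈ m, ∃ q ∈ m, p.1 < q.1 ∧ q.1 < p.2 ∧ p.2 < q.2

instance : DecidablePred Cross := fun _ => by unfold Cross; infer_instance

def ncSet (s : Finset ℕ) : Finset (Finset (ℕ × ℕ)) :=
  (matchSet s).filter fun m => ¬ Cross m

lemma mem_matchSet {s : Finset ℕ} {m : Finset (ℕ × ℕ)} :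
    m ∈ matchSet s ↔ IsM s m := by
  constructor
  · intro h; exact (mem_filter.mp h).2
  · intro h
    refine mem_filter.mpr ⟨mem_powerset.mpr ?_, h⟩
    intro p hp
    exact mem_product.mpr ⟨(h.1 p hp).2.1, (h.1 p hp).2.2⟩

lemma unique_pair {s : Finset ℕ} {m : Finset (ℕ × ℕ)} (hm : m ∈ matchSet s) {x : ℕ}
    (hx : x ∈ s) : ∃! p, p ∈ m ∧ (p.1 = x ∨ p.2 = x) := by
  obtain ⟨h1, h2, h3⟩ := mem_matchSet.mp hm
  obtain ⟨p, hp, hpx⟩ := h2 x hx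
  refine ⟨p, ⟨hp, hpx⟩, ?_⟩
  rintro q ⟨hq, hqx⟩
  by_contra hne
  obtain ⟨a1, a2, a3, a4⟩ := h3 q hq p hp hne
  rcases hqx with h | h <;> rcases hpx with h' | h' <;> omega

lemma min_pair {s : Finset ℕ} {m : Finset (ℕ × ℕ)} (hm : m ∈ matchSet s) (hs : s.Nonempty) :
    ∃ j, (s.min' hs, j) ∈ m ∧ j ∈ s.erase (s.min' hs) := by
  obtain ⟨h1, h2, h3⟩ := mem_matchSet.mp hm
  obtain ⟨p, hp, hpx⟩ := h2 (s.min' hs) (s.min'_mem hs)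
  obtain ⟨hlt, hp1, hp2⟩ := h1 p hp
  rcases hpx with h | h
  · refine ⟨p.2, by rwa [← h], mem_erase.mpr ⟨by omega, hp2⟩⟩
  · exfalso
    have := s.min'_le p.1 hp1
    omega

lemma insert_mem_matchSet {s : Finset ℕ} {m : Finset (ℕ × ℕ)} {a b : ℕ} (hab : a < b)
    (ha : a ∈ s) (hb : b ∈ s) (hm : m ∈ matchSet ((s.erase a).erase b)) :
    insert (a, b) m ∈ matchSet s := by
  obtain ⟨h1, h2, h3⟩ := mem_matchSet.mp hm
  have hend : ∀ p ∈ m, p.1 ≠ a ∧ p.1 ≠ b ∧ p.2 ≠ a ∧ p.2 ≠ b := by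
    intro p hp
    obtain ⟨_, hp1, hp2⟩ := h1 p hp
    simp only [mem_erase] at hp1 hp2
    exact ⟨hp1.2.1, hp1.1, hp2.2.1, hp2.1⟩
  refine mem_matchSet.mpr ⟨?_, ?_, ?_⟩
  · intro p hp
    rcases mem_insert.mp hp with rfl | hp
    · exact ⟨hab, ha, hb⟩
    · obtain ⟨hlt, hp1, hp2⟩ := h1 p hp
      exact ⟨hlt, mem_of_mem_erase (mem_of_mem_erase hp1),
        mem_of_mem_erase (mem_of_mem_erase hp2)⟩
  · intro x hx
    by_cases hxa : x = a
    · exact ⟨(a, b), mem_insert_self _ _, Or.inl hxa.symm⟩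
    by_cases hxb : x = b
    · exact ⟨(a, b), mem_insert_self _ _, Or.inr hxb.symm⟩
    · obtain ⟨p, hp, hpx⟩ := h2 x (mem_erase.mpr ⟨hxb, mem_erase.mpr ⟨hxa, hx⟩⟩)
      exact ⟨p, mem_insert_of_mem hp, hpx⟩
  · intro p hp q hq hne
    rcases mem_insert.mp hp with rfl | hp <;> rcases mem_insert.mp hq with rfl | hq
    · exact absurd rfl hne
    · have := hend q hq; simp only []; omega
    · have := hend p hp; simp only []; omega
    · exact h3 p hp q hq hne

lemma erase_mem_matchSet {s : Finset ℕ} {m : Finset (ℕ × ℕ)} {a b : ℕ}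
    (hm : m ∈ matchSet s) (hp : (a, b) ∈ m) :
    m.erase (a, b) ∈ matchSet ((s.erase a).erase b) := by
  obtain ⟨h1, h2, h3⟩ := mem_matchSet.mp hm
  have hdiff : ∀ q ∈ m.erase (a, b), q.1 ≠ a ∧ q.1 ≠ b ∧ q.2 ≠ a ∧ q.2 ≠ b := by
    intro q hq
    obtain ⟨c1, c2, c3, c4⟩ := h3 q (mem_of_mem_erase hq) (a, b) hp (ne_of_mem_erase hq)
    exact ⟨c1, c2, c3, c4⟩
  refine mem_matchSet.mpr ⟨?_, ?_, ?_⟩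
  · intro q hq
    obtain ⟨hlt, hq1, hq2⟩ := h1 q (mem_of_mem_erase hq)
    obtain ⟨c1, c2, c3, c4⟩ := hdiff q hq
    exact ⟨hlt, mem_erase.mpr ⟨c2, mem_erase.mpr ⟨c1, hq1⟩⟩,
      mem_erase.mpr ⟨c4, mem_erase.mpr ⟨c3, hq2⟩⟩⟩
  · intro x hx
    simp only [mem_erase] at hx
    obtain ⟨q, hq, hqx⟩ := h2 x hx.2.2
    refine ⟨q, mem_erase.mpr ⟨?_, hq⟩, hqx⟩
    rintro rfl
    simp only [] at hqx
    omega
  · intro p hp' q hq' hne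
    exact h3 p (mem_of_mem_erase hp') q (mem_of_mem_erase hq') hne

lemma matchSet_empty : matchSet (∅ : Finset ℕ) = {∅} := by
  ext m
  simp only [mem_singleton, mem_matchSet, IsM]
  constructor
  · rintro ⟨h1, -, -⟩
    refine eq_empty_of_forall_notMem fun p hp => ?_
    exact absurd (h1 p hp).2.1 (notMem_empty _)
  · rintro rfl
    refine ⟨fun p hp => absurd hp (notMem_empty _), fun x hx => absurd hx (notMem_empty _),
      fun p hp => absurd hp (notMem_empty _)⟩

lemma card_of_matchSet {s : Finset ℕ} {m : Finset (ℕ × ℕ)} (hm : m ∈ matchSet s) :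
    s.card = 2 * m.card := by
  obtain ⟨h1, h2, h3⟩ := mem_matchSet.mp hm
  have hs : s = m.biUnion fun p => ({p.1, p.2} : Finset ℕ) := by
    ext x
    simp only [mem_biUnion, mem_insert, mem_singleton]
    constructor
    · intro hx
      obtain ⟨p, hp, hpx⟩ := h2 x hx
      exact ⟨p, hp, by omega⟩
    · rintro ⟨p, hp, hx⟩
      obtain ⟨-, hp1, hp2⟩ := h1 p hp
      rcases hx with rfl | rfl <;> assumption
  rw [hs, card_biUnion]
  · rw [Finset.sum_congr rfl fun p hp => ?_, Finset.sum_const, smul_eq_mul, mul_comm]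
    · exact (card_pair (by have := (h1 p hp).1; omega) : ({p.1, p.2} : Finset ℕ).card = 2)
  · intro p hp q hq hne
    have := h3 p hp q hq hne
    simp only [disjoint_left, mem_insert, mem_singleton]
    omega

def T : ℕ → ℕ
  | 0 => 1
  | k + 1 => (2 * k + 1) * T k

lemma T_pos (k : ℕ) : 0 < T k := by
  induction k with
  | zero => exact Nat.one_pos
  | succ k ih => exact Nat.mul_pos (by omega) ih

lemma card_matchSet_decomp {s : Finset ℕ} (hs : s.Nonempty) :
    (matchSet s).card =
      ∑ j ∈ s.erase (s.min' hs), (matchSet ((s.erase (s.min' hs)).erase j)).card := by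
  set m0 := s.min' hs with hm0
  rw [← Finset.card_sigma]
  refine (Finset.card_bij (fun x _ => insert (m0, x.1) x.2) ?_ ?_ ?_).symm
  · rintro ⟨j, m⟩ hx
    simp only [Finset.mem_sigma] at hx
    obtain ⟨hj, hmm⟩ := hx
    have hj' := mem_erase.mp hj
    exact insert_mem_matchSet (lt_of_le_of_ne (s.min'_le j hj'.2) (Ne.symm hj'.1))
      (s.min'_mem hs) hj'.2 hmm
  · rintro ⟨j, m⟩ hx ⟨j', m'⟩ hx' heq
    simp only [Finset.mem_sigma] at hx hx'
    have hnotm : ∀ (j : ℕ) (m : Finset (ℕ × ℕ)), m ∈ matchSet ((s.erase m0).erase j) →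
        ∀ b, (m0, b) ∉ m := by
      intro j m hmm b hb
      have := (mem_matchSet.mp hmm).1 _ hb
      simp only [mem_erase] at this
      exact this.2.1.2.1 rfl
    replace heq : insert (m0, j) m = insert (m0, j') m' := heq
    have hj' : (m0, j') ∈ insert (m0, j) m := by
      rw [heq]; exact mem_insert_self _ _
    rcases mem_insert.mp hj' with h | h
    · have hjj : j = j' := by injection h.symm
      subst hjj
      have : m = m' := by
        have h1 : m = (insert (m0, j) m).erase (m0, j) :=
          (erase_insert (hnotm j m hx.2 j)).symm
        have h2 : m' = (insert (m0, j) m').erase (m0, j) :=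
          (erase_insert (hnotm j m' hx'.2 j)).symm
        rw [h1, h2, heq]
      subst this; rfl
    · exact absurd h (hnotm j m hx.2 j')
  · intro m hm
    obtain ⟨j, hjm, hj⟩ := min_pair hm hs
    refine ⟨⟨j, m.erase (m0, j)⟩, Finset.mem_sigma.mpr ⟨hj, erase_mem_matchSet hm hjm⟩, ?_⟩
    exact insert_erase hjm

lemma card_matchSet : ∀ (k : ℕ) (s : Finset ℕ), s.card = 2 * k → (matchSet s).card = T k := by
  intro k
  induction k with
  | zero =>
    intro s hsc
    rw [Finset.card_eq_zero.mp (by omega : s.card = 0), matchSet_empty]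
    simp [T]
  | succ k ih =>
    intro s hsc
    have hs : s.Nonempty := Finset.card_pos.mp (by omega)
    rw [card_matchSet_decomp hs]
    have hcard : ∀ j ∈ s.erase (s.min' hs), ((s.erase (s.min' hs)).erase j).card = 2 * k := by
      intro j hj
      rw [card_erase_of_mem hj, card_erase_of_mem (s.min'_mem hs), hsc]; omega
    rw [Finset.sum_congr rfl fun j hj => ih _ (hcard j hj), Finset.sum_const,
      card_erase_of_mem (s.min'_mem hs), hsc, smul_eq_mul]
    show (2 * (k + 1) - 1) * T k = (2 * k + 1) * T k
    congr 1

lemma mem_ncSet {s : Finset ℕ} {m : Finset (ℕ × ℕ)} :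
    m ∈ ncSet s ↔ m ∈ matchSet s ∧ ¬ Cross m := mem_filter

lemma cross_mono {m m' : Finset (ℕ × ℕ)} (h : m ⊆ m') : Cross m → Cross m' := by
  rintro ⟨p, hp, q, hq, h1, h2, h3⟩
  exact ⟨p, h hp, q, h hq, h1, h2, h3⟩

lemma union_mem_matchSet {A B : Finset ℕ} {mA mB : Finset (ℕ × ℕ)}
    (hAB : ∀ a ∈ A, ∀ b ∈ B, a < b)
    (hA : mA ∈ matchSet A) (hB : mB ∈ matchSet B) : mA ∪ mB ∈ matchSet (A ∪ B) := by
  obtain ⟨a1, a2, a3⟩ := mem_matchSet.mp hA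
  obtain ⟨b1, b2, b3⟩ := mem_matchSet.mp hB
  refine mem_matchSet.mpr ⟨?_, ?_, ?_⟩
  · intro p hp
    rcases mem_union.mp hp with h | h
    · obtain ⟨u, v, w⟩ := a1 p h
      exact ⟨u, mem_union_left _ v, mem_union_left _ w⟩
    · obtain ⟨u, v, w⟩ := b1 p h
      exact ⟨u, mem_union_right _ v, mem_union_right _ w⟩
  · intro x hx
    rcases mem_union.mp hx with h | h
    · obtain ⟨p, hp, hpx⟩ := a2 x h
      exact ⟨p, mem_union_left _ hp, hpx⟩
    · obtain ⟨p, hp, hpx⟩ := b2 x h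
      exact ⟨p, mem_union_right _ hp, hpx⟩
  · intro p hp q hq hne
    rcases mem_union.mp hp with h | h <;> rcases mem_union.mp hq with h' | h'
    · exact a3 p h q h' hne
    · obtain ⟨-, u1, u2⟩ := a1 p h
      obtain ⟨-, v1, v2⟩ := b1 q h'
      exact ⟨(hAB _ u1 _ v1).ne, (hAB _ u1 _ v2).ne, (hAB _ u2 _ v1).ne, (hAB _ u2 _ v2).ne⟩
    · obtain ⟨-, u1, u2⟩ := b1 p h
      obtain ⟨-, v1, v2⟩ := a1 q h'
      exact ⟨(hAB _ v1 _ u1).ne', (hAB _ v2 _ u1).ne', (hAB _ v1 _ u2).ne', (hAB _ v2 _ u2).ne'⟩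
    · exact b3 p h q h' hne

lemma card_ncSet_decomp {s : Finset ℕ} (hs : s.Nonempty) :
    (ncSet s).card = ∑ j ∈ s.erase (s.min' hs),
      (ncSet (s.filter fun x => s.min' hs < x ∧ x < j)).card *
        (ncSet (s.filter fun x => j < x)).card := by
  set m0 := s.min' hs with hm0def
  have hmin : ∀ x ∈ s, m0 ≤ x := fun x hx => s.min'_le x hx
  have hm0s : m0 ∈ s := s.min'_mem hs
  simp only [← Finset.card_product]
  rw [← Finset.card_sigma]
  refine (Finset.card_bij (fun x _ => insert (m0, x.1) (x.2.1 ∪ x.2.2)) ?_ ?_ ?_).symm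
  case _ =>
    -- well-defined
    rintro ⟨j, mA, mB⟩ hx
    dsimp only
    simp only [Finset.mem_sigma, Finset.mem_product] at hx
    obtain ⟨hj, hmA, hmB⟩ := hx
    obtain ⟨hmA, hncA⟩ := mem_ncSet.mp hmA
    obtain ⟨hmB, hncB⟩ := mem_ncSet.mp hmB
    have hj' := mem_erase.mp hj
    have hm0j : m0 < j := lt_of_le_of_ne (hmin j hj'.2) (Ne.symm hj'.1)
    have hbA : ∀ p ∈ mA, m0 < p.1 ∧ p.1 < p.2 ∧ p.2 < j := by
      intro p hp
      obtain ⟨hlt, h1, h2⟩ := (mem_matchSet.mp hmA).1 p hp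
      simp only [mem_filter] at h1 h2
      exact ⟨h1.2.1, hlt, h2.2.2⟩
    have hbB : ∀ p ∈ mB, j < p.1 ∧ p.1 < p.2 := by
      intro p hp
      obtain ⟨hlt, h1, h2⟩ := (mem_matchSet.mp hmB).1 p hp
      simp only [mem_filter] at h1 h2
      exact ⟨h1.2, hlt⟩
    have hABu : (s.filter fun x => m0 < x ∧ x < j) ∪ (s.filter fun x => j < x)
        = (s.erase m0).erase j := by
      ext x
      simp only [mem_union, mem_filter, mem_erase]
      constructor
      · rintro (⟨hx, h⟩ | ⟨hx, h⟩) <;> exact ⟨by omega, by omega, hx⟩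
      · rintro ⟨h1, h2, hx⟩
        have := hmin x hx
        rcases Nat.lt_or_ge x j with h | h
        · exact Or.inl ⟨hx, by omega, h⟩
        · exact Or.inr ⟨hx, by omega⟩
    have hU : mA ∪ mB ∈ matchSet ((s.erase m0).erase j) := by
      rw [← hABu]
      refine union_mem_matchSet ?_ hmA hmB
      intro a ha b hb
      simp only [mem_filter] at ha hb
      omega
    refine mem_ncSet.mpr ⟨insert_mem_matchSet hm0j hm0s hj'.2 hU, ?_⟩
    rintro ⟨p, hp, q, hq, h1, h2, h3⟩
    rcases mem_insert.mp hp with rfl | hp'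
    · rcases mem_insert.mp hq with rfl | hq'
      · omega
      · rcases mem_union.mp hq' with h | h
        · have := hbA q h; omega
        · have := hbB q h; omega
    · rcases mem_union.mp hp' with hpA | hpB
      · rcases mem_insert.mp hq with rfl | hq'
        · have := hbA p hpA; omega
        · rcases mem_union.mp hq' with h | h
          · exact hncA ⟨p, hpA, q, h, h1, h2, h3⟩
          · have := hbA p hpA; have := hbB q h; omega
      · rcases mem_insert.mp hq with rfl | hq'
        · have := hbB p hpB; omega
        · rcases mem_union.mp hq' with h | h
          · have := hbB p hpB; have := hbA q h; omega
          · exact hncB ⟨p, hpB, q, h, h1, h2, h3⟩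
  case _ =>
    -- injective
    rintro ⟨j, mA, mB⟩ hx ⟨j', mA', mB'⟩ hx' heq
    simp only [Finset.mem_sigma, Finset.mem_product] at hx hx'
    obtain ⟨hj, hmA, hmB⟩ := hx
    obtain ⟨hj', hmA', hmB'⟩ := hx'
    replace heq : insert (m0, j) (mA ∪ mB) = insert (m0, j') (mA' ∪ mB') := heq
    have hsplit : ∀ (jj : ℕ) (mX mY : Finset (ℕ × ℕ)),
        mX ∈ ncSet (s.filter fun x => m0 < x ∧ x < jj) →
        mY ∈ ncSet (s.filter fun x => jj < x) →
        (∀ p ∈ mX, m0 < p.1 ∧ p.1 < jj) ∧ (∀ p ∈ mY, jj < p.1) := by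
      intro jj mX mY hX hY
      constructor
      · intro p hp
        obtain ⟨hlt, h1, h2⟩ := (mem_matchSet.mp (mem_ncSet.mp hX).1).1 p hp
        rw [mem_filter] at h1
        exact ⟨h1.2.1, h1.2.2⟩
      · intro p hp
        obtain ⟨hlt, h1, h2⟩ := (mem_matchSet.mp (mem_ncSet.mp hY).1).1 p hp
        exact (mem_filter.mp h1).2
    obtain ⟨bA, bB⟩ := hsplit j mA mB hmA hmB
    obtain ⟨bA', bB'⟩ := hsplit j' mA' mB' hmA' hmB'
    have hm0j : m0 < j := by have := mem_erase.mp hj; have := hmin j this.2; omega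
    have hm0j' : m0 < j' := by have := mem_erase.mp hj'; have := hmin j' this.2; omega
    have hne : ∀ p ∈ mA ∪ mB, p.1 ≠ m0 := by
      intro p hp
      rcases mem_union.mp hp with h | h
      · have := bA p h; omega
      · have := bB p h; omega
    have hne' : ∀ p ∈ mA' ∪ mB', p.1 ≠ m0 := by
      intro p hp
      rcases mem_union.mp hp with h | h
      · have := bA' p h; omega
      · have := bB' p h; omega
    have hjj : j = j' := by
      have h1 : (m0, j') ∈ insert (m0, j) (mA ∪ mB) := by
        rw [heq]; exact mem_insert_self _ _
      rcases mem_insert.mp h1 with h | h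
      · injection h.symm with h1 h2
      · exact absurd rfl (hne _ h)
    subst hjj
    have nA : (m0, j) ∉ mA ∪ mB := fun h => hne _ h rfl
    have nA' : (m0, j) ∉ mA' ∪ mB' := fun h => hne' _ h rfl
    have hU : mA ∪ mB = mA' ∪ mB' := by
      rw [← erase_insert nA, ← erase_insert nA', heq]
    have eA : mA = mA' := by
      ext p
      constructor
      · intro hp
        have hp2 : p ∈ mA' ∪ mB' := hU ▸ mem_union_left _ hp
        rcases mem_union.mp hp2 with h | h
        · exact h
        · have := bA p hp; have := bB' p h; omega
      · intro hp
        have hp2 : p ∈ mA ∪ mB := hU ▸ mem_union_left _ hp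
        rcases mem_union.mp hp2 with h | h
        · exact h
        · have := bA' p hp; have := bB p h; omega
    have eB : mB = mB' := by
      ext p
      constructor
      · intro hp
        have hp2 : p ∈ mA' ∪ mB' := hU ▸ mem_union_right _ hp
        rcases mem_union.mp hp2 with h | h
        · have := bB p hp; have := bA' p h; omega
        · exact h
      · intro hp
        have hp2 : p ∈ mA ∪ mB := hU ▸ mem_union_right _ hp
        rcases mem_union.mp hp2 with h | h
        · have := bB' p hp; have := bA p h; omega
        · exact h
    subst eA; subst eB
    rfl
  case _ =>
    -- surjective
    intro m hm
    obtain ⟨hmm, hnc⟩ := mem_ncSet.mp hm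
    obtain ⟨j, hjm, hj⟩ := min_pair hmm hs
    have hjs := mem_erase.mp hj
    have hm0j : m0 < j := by have := hmin j hjs.2; omega
    set r := m.erase (m0, j) with hrdef
    have hr : r ∈ matchSet ((s.erase m0).erase j) := erase_mem_matchSet hmm hjm
    have hrb : ∀ p ∈ r, m0 < p.1 ∧ p.1 < p.2 ∧ p.1 ≠ j ∧ p.2 ≠ j ∧ p.1 ∈ s ∧ p.2 ∈ s := by
      intro p hp
      obtain ⟨hlt, h1, h2⟩ := (mem_matchSet.mp hr).1 p hp
      simp only [mem_erase] at h1 h2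
      have := hmin p.1 h1.2.2
      exact ⟨by omega, hlt, h1.1, h2.1, h1.2.2, h2.2.2⟩
    have hstr : ∀ p ∈ r, ¬(p.1 < j ∧ j < p.2) := by
      rintro p hp ⟨u1, u2⟩
      exact hnc ⟨(m0, j), hjm, p, mem_of_mem_erase hp, (hrb p hp).1, u1, u2⟩
    have htri : ∀ p ∈ r, (p.1 < j ∧ p.2 < j) ∨ (j < p.1 ∧ j < p.2) := by
      intro p hp
      have h1 := hrb p hp
      have h2 := hstr p hp
      omega
    set mA := r.filter (fun p => p.2 < j) with hmAdef
    set mB := r.filter (fun p => j < p.1) with hmBdef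
    have hAr : mA ⊆ r := filter_subset _ _
    have hBr : mB ⊆ r := filter_subset _ _
    have hrm : r ⊆ m := erase_subset _ _
    have hUr : mA ∪ mB = r := by
      ext p
      simp only [mem_union, hmAdef, hmBdef, mem_filter]
      constructor
      · rintro (⟨h, -⟩ | ⟨h, -⟩) <;> exact h
      · intro hp
        rcases htri p hp with h | h
        · exact Or.inl ⟨hp, h.2⟩
        · exact Or.inr ⟨hp, h.1⟩
    have hmAm : mA ∈ ncSet (s.filter fun x => m0 < x ∧ x < j) := by
      refine mem_ncSet.mpr ⟨mem_matchSet.mpr ⟨?_, ?_, ?_⟩, ?_⟩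
      · intro p hp
        have h1 := hrb p (hAr hp)
        have h2 := (mem_filter.mp hp).2
        refine ⟨h1.2.1, mem_filter.mpr ⟨h1.2.2.2.2.1, by omega⟩,
          mem_filter.mpr ⟨h1.2.2.2.2.2, by omega⟩⟩
      · intro x hx
        rw [mem_filter] at hx
        have hx' : x ∈ (s.erase m0).erase j :=
          mem_erase.mpr ⟨by omega, mem_erase.mpr ⟨by omega, hx.1⟩⟩
        obtain ⟨p, hp, hpx⟩ := (mem_matchSet.mp hr).2.1 x hx'
        refine ⟨p, mem_filter.mpr ⟨hp, ?_⟩, hpx⟩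
        rcases htri p hp with h | h
        · exact h.2
        · omega
      · intro p hp q hq hne
        exact (mem_matchSet.mp hr).2.2 p (hAr hp) q (hAr hq) hne
      · intro hc
        exact hnc (cross_mono (hAr.trans hrm) hc)
    have hmBm : mB ∈ ncSet (s.filter fun x => j < x) := by
      refine mem_ncSet.mpr ⟨mem_matchSet.mpr ⟨?_, ?_, ?_⟩, ?_⟩
      · intro p hp
        have h1 := hrb p (hBr hp)
        have h2 := (mem_filter.mp hp).2
        refine ⟨h1.2.1, mem_filter.mpr ⟨h1.2.2.2.2.1, by omega⟩,
          mem_filter.mpr ⟨h1.2.2.2.2.2, by omega⟩⟩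
      · intro x hx
        rw [mem_filter] at hx
        have hx' : x ∈ (s.erase m0).erase j :=
          mem_erase.mpr ⟨by omega, mem_erase.mpr ⟨by omega, hx.1⟩⟩
        obtain ⟨p, hp, hpx⟩ := (mem_matchSet.mp hr).2.1 x hx'
        refine ⟨p, mem_filter.mpr ⟨hp, ?_⟩, hpx⟩
        rcases htri p hp with h | h
        · omega
        · exact h.1
      · intro p hp q hq hne
        exact (mem_matchSet.mp hr).2.2 p (hBr hp) q (hBr hq) hne
      · intro hc
        exact hnc (cross_mono (hBr.trans hrm) hc)
    refine ⟨⟨j, mA, mB⟩, Finset.mem_sigma.mpr ⟨hj, Finset.mem_product.mpr ⟨hmAm, hmBm⟩⟩, ?_⟩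
    show insert (m0, j) (mA ∪ mB) = m
    rw [hUr, hrdef]
    exact insert_erase hjm

lemma ncSet_empty : ncSet (∅ : Finset ℕ) = {∅} := by
  ext m
  rw [mem_ncSet, matchSet_empty]
  simp only [mem_singleton]
  constructor
  · exact fun h => h.1
  · rintro rfl
    exact ⟨rfl, by rintro ⟨p, hp, -⟩; exact notMem_empty p hp⟩

lemma ncSet_eq_empty_of_odd {s : Finset ℕ} (h : ¬ Even s.card) : ncSet s = ∅ := by
  refine eq_empty_of_forall_notMem fun m hm => h ?_
  have := card_of_matchSet (mem_ncSet.mp hm).1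
  exact ⟨m.card, by omega⟩

lemma sum_rank (F : ℕ → ℕ) : ∀ (n : ℕ) (u : Finset ℕ), u.card = n →
    ∑ j ∈ u, F ((u.filter fun x => x < j).card) = ∑ t ∈ range n, F t := by
  intro n
  induction n with
  | zero => intro u hu; rw [card_eq_zero.mp hu]; simp
  | succ n ih =>
    intro u hu
    have hne : u.Nonempty := card_pos.mp (by omega)
    set M := u.max' hne with hM
    have hMu : M ∈ u := u.max'_mem hne
    have hmax : ∀ x ∈ u, x ≤ M := fun x hx => u.le_max' x hx
    have h1 : (u.filter fun x => x < M) = u.erase M := by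
      ext x
      simp only [mem_filter, mem_erase]
      constructor
      · rintro ⟨hx, h⟩; exact ⟨by omega, hx⟩
      · rintro ⟨hx, h⟩; have := hmax x h; exact ⟨h, by omega⟩
    have h2 : ∀ j ∈ u.erase M, (u.filter fun x => x < j) = (u.erase M).filter fun x => x < j := by
      intro j hj
      have hj' := mem_erase.mp hj
      have hjM := hmax j hj'.2
      ext x
      simp only [mem_filter, mem_erase]
      constructor
      · rintro ⟨hx, h⟩; exact ⟨⟨by omega, hx⟩, h⟩
      · rintro ⟨⟨-, hx⟩, h⟩; exact ⟨hx, h⟩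
    rw [← Finset.add_sum_erase u _ hMu, h1, card_erase_of_mem hMu, hu, Nat.add_sub_cancel]
    rw [Finset.sum_congr rfl fun j hj => by rw [h2 j hj]]
    rw [ih (u.erase M) (by rw [card_erase_of_mem hMu, hu]; omega)]
    rw [Finset.sum_range_succ]
    omega

lemma sum_even_vanish (F : ℕ → ℕ) (hodd : ∀ t, ¬ Even t → F t = 0) :
    ∀ n, ∑ t ∈ range (2 * n + 1), F t = ∑ i ∈ range (n + 1), F (2 * i) := by
  intro n
  induction n with
  | zero => simp
  | succ n ih =>
    have h : 2 * (n + 1) + 1 = (2 * n + 1) + 1 + 1 := by ring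
    rw [h, Finset.sum_range_succ, Finset.sum_range_succ, ih,
      Finset.sum_range_succ (f := fun i => F (2 * i)) (n := n + 1)]
    have h0 : F (2 * n + 1) = 0 := hodd _ (by rintro ⟨r, hr⟩; omega)
    rw [h0]
    ring_nf

lemma card_ncSet : ∀ (k : ℕ) (s : Finset ℕ), s.card = 2 * k → (ncSet s).card = catalan k := by
  intro k
  induction k using Nat.strong_induction_on with
  | _ k ih =>
    match k, ih with
    | 0, _ =>
      intro s hsc
      rw [card_eq_zero.mp (by omega : s.card = 0), ncSet_empty]
      simp
    | k + 1, ih =>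
      intro s hsc
      have hs : s.Nonempty := card_pos.mp (by omega)
      set m0 := s.min' hs with hm0
      have hmin : ∀ x ∈ s, m0 ≤ x := fun x hx => s.min'_le x hx
      rw [card_ncSet_decomp hs]
      set u := s.erase m0 with hu
      have hucard : u.card = 2 * k + 1 := by
        rw [hu, card_erase_of_mem (s.min'_mem hs)]; omega
      set F : ℕ → ℕ := fun t => if Even t then catalan (t / 2) * catalan (k - t / 2) else 0
        with hF
      have hvan : ∀ t, ¬ Even t → F t = 0 := fun t ht => if_neg ht
      have hterm : ∀ j ∈ u, (ncSet (s.filter fun x => m0 < x ∧ x < j)).card *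
          (ncSet (s.filter fun x => j < x)).card = F ((u.filter fun x => x < j).card) := by
        intro j hj
        have hj' := mem_erase.mp hj
        have hm0j : m0 < j := by have := hmin j hj'.2; omega
        have hAeq : (s.filter fun x => m0 < x ∧ x < j) = u.filter fun x => x < j := by
          ext x
          simp only [mem_filter, hu, mem_erase]
          constructor
          · rintro ⟨hx, h1, h2⟩; exact ⟨⟨by omega, hx⟩, h2⟩
          · rintro ⟨⟨h1, hx⟩, h2⟩; have := hmin x hx; exact ⟨hx, by omega, h2⟩
        have hBeq : (s.filter fun x => j < x) = u.filter fun x => j < x := by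
          ext x
          simp only [mem_filter, hu, mem_erase]
          constructor
          · rintro ⟨hx, h1⟩; exact ⟨⟨by omega, hx⟩, h1⟩
          · rintro ⟨⟨h1, hx⟩, h2⟩; exact ⟨hx, h2⟩
        set t := (u.filter fun x => x < j).card with ht
        have hsplit : (u.filter fun x => ¬ x < j) = insert j (u.filter fun x => j < x) := by
          ext x
          simp only [mem_filter, mem_insert]
          constructor
          · rintro ⟨hx, h⟩
            rcases Nat.eq_or_lt_of_le (by omega : j ≤ x) with h' | h'
            · exact Or.inl h'.symm
            · exact Or.inr ⟨hx, h'⟩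
          · rintro (rfl | ⟨hx, h⟩)
            · exact ⟨hj, by omega⟩
            · exact ⟨hx, by omega⟩
        have hjnot : j ∉ u.filter fun x => j < x := by
          simp only [mem_filter]
          omega
        have hBcard : (u.filter fun x => j < x).card = 2 * k - t := by
          have this2 : (u.filter fun x => x < j).card + (u.filter fun x => ¬ x < j).card
              = u.card :=
            Finset.card_filter_add_card_filter_not (s := u) (p := fun x => x < j)
          rw [hsplit, card_insert_of_notMem hjnot] at this2
          omega
        have htle : t ≤ 2 * k := by
          have this2 : (u.filter fun x => x < j).card + (u.filter fun x => ¬ x < j).card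
              = u.card :=
            Finset.card_filter_add_card_filter_not (s := u) (p := fun x => x < j)
          rw [hsplit, card_insert_of_notMem hjnot] at this2
          omega
        rw [hAeq, hBeq]
        by_cases he : Even t
        · obtain ⟨i, hi⟩ := he
          have hik : i ≤ k := by omega
          rw [ih i (by omega) _ (by omega : (u.filter fun x => x < j).card = 2 * i)]
          rw [ih (k - i) (by omega) _ (by rw [hBcard]; omega)]
          rw [hF]
          simp only []
          rw [if_pos ⟨i, hi⟩]
          have : t / 2 = i := by omega
          rw [this]
        · have : (ncSet (u.filter fun x => x < j)).card = 0 := by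
            rw [ncSet_eq_empty_of_odd (by rwa [← ht])]
            exact card_empty
          rw [this, hF]
          simp only []
          rw [if_neg he, zero_mul]
      rw [Finset.sum_congr rfl hterm, sum_rank F (2 * k + 1) u hucard, sum_even_vanish F hvan k]
      have hFi : ∀ i ∈ range (k + 1), F (2 * i) = catalan i * catalan (k - i) := by
        intro i hi
        rw [hF]
        simp only []
        rw [if_pos ⟨i, by omega⟩]
        congr 2 <;> omega
      rw [Finset.sum_congr rfl hFi, catalan_succ]
      exact (Fin.sum_univ_eq_sum_range (fun i => catalan i * catalan (k - i)) (k + 1)).symm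

def toM (n : ℕ) (f : Fin n → Fin n) : Finset (ℕ × ℕ) :=
  (univ.filter fun x : Fin n => x < f x).image fun x => (x.val, (f x).val)

lemma mem_toM {n : ℕ} {f : Fin n → Fin n} {p : ℕ × ℕ} :
    p ∈ toM n f ↔ ∃ x : Fin n, x < f x ∧ (x.val, (f x).val) = p := by
  simp only [toM, mem_image, mem_filter, mem_univ, true_and]

lemma toM_mem {n : ℕ} {f : Fin n → Fin n} (h1 : ∀ x, f (f x) = x) (h2 : ∀ x, f x ≠ x) :
    toM n f ∈ matchSet (Finset.range n) := by
  refine mem_matchSet.mpr ⟨?_, ?_, ?_⟩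
  · rintro p hp
    obtain ⟨x, hx, rfl⟩ := mem_toM.mp hp
    exact ⟨hx, mem_range.mpr x.isLt, mem_range.mpr (f x).isLt⟩
  · intro y hy
    set x : Fin n := ⟨y, mem_range.mp hy⟩ with hxd
    rcases lt_or_gt_of_ne (h2 x) with h | h
    · refine ⟨((f x).val, (f (f x)).val), mem_toM.mpr ⟨f x, ?_, rfl⟩, Or.inr ?_⟩
      · rw [h1 x]; exact h
      · show (f (f x)).val = y
        rw [h1 x]
    · exact ⟨(x.val, (f x).val), mem_toM.mpr ⟨x, h, rfl⟩, Or.inl rfl⟩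
  · intro p hp q hq hne
    obtain ⟨x, hx, rfl⟩ := mem_toM.mp hp
    obtain ⟨y, hy, rfl⟩ := mem_toM.mp hq
    have hxy : x ≠ y := by rintro rfl; exact hne rfl
    have hfxy : f x ≠ f y := fun h => hxy (by rw [← h1 x, h, h1 y])
    have e1 : x.val ≠ y.val := fun h => hxy (Fin.ext h)
    have e4 : (f x).val ≠ (f y).val := fun h => hfxy (Fin.ext h)
    have e2 : x.val ≠ (f y).val := by
      intro h
      have hxfy : x = f y := Fin.ext h
      have : f x = y := by rw [hxfy, h1 y]
      have := Fin.lt_def.mp hx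
      have := Fin.lt_def.mp hy
      rw [hxfy] at *
      omega
    have e3 : (f x).val ≠ y.val := by
      intro h
      have hfxy' : f x = y := Fin.ext h
      have : f y = x := by rw [← hfxy', h1 x]
      have h5 := Fin.lt_def.mp hx
      have h6 := Fin.lt_def.mp hy
      rw [hfxy'] at h5
      rw [this] at h6
      omega
    exact ⟨e1, e2, e3, e4⟩

lemma toM_cross {n : ℕ} {f : Fin n → Fin n} (h1 : ∀ x, f (f x) = x) (h2 : ∀ x, f x ≠ x) :
    (∃ a b : Fin n, a < b ∧ b < f a ∧ f a < f b) ↔ Cross (toM n f) := by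
  constructor
  · rintro ⟨a, b, u1, u2, u3⟩
    rw [Fin.lt_def] at u1 u2 u3
    have ha : a < f a := Fin.lt_def.mpr (by omega)
    have hb : b < f b := Fin.lt_def.mpr (by omega)
    exact ⟨_, mem_toM.mpr ⟨a, ha, rfl⟩, _, mem_toM.mpr ⟨b, hb, rfl⟩, by omega, by omega, by omega⟩
  · rintro ⟨p, hp, q, hq, u1, u2, u3⟩
    obtain ⟨x, hx, rfl⟩ := mem_toM.mp hp
    obtain ⟨y, hy, rfl⟩ := mem_toM.mp hq
    exact ⟨x, y, Fin.lt_def.mpr (by omega), Fin.lt_def.mpr (by omega), Fin.lt_def.mpr (by omega)⟩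

lemma toM_inj {n : ℕ} {f g : Fin n → Fin n}
    (hf1 : ∀ x, f (f x) = x) (hf2 : ∀ x, f x ≠ x)
    (hg1 : ∀ x, g (g x) = x) (hg2 : ∀ x, g x ≠ x)
    (h : toM n f = toM n g) : f = g := by
  have key : ∀ x : Fin n, x < f x → g x = f x := by
    intro x hx
    have hp : (x.val, (f x).val) ∈ toM n g := h ▸ mem_toM.mpr ⟨x, hx, rfl⟩
    obtain ⟨y, hy, heq⟩ := mem_toM.mp hp
    have h1 : y = x := Fin.ext (by injection heq)
    subst h1
    have : (g y).val = (f y).val := by injection heq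
    exact Fin.ext this
  funext x
  rcases lt_or_gt_of_ne (hf2 x) with h' | h'
  · have hz : f x < f (f x) := by rw [hf1 x]; exact h'
    have hgf := key (f x) hz
    rw [hf1 x] at hgf
    have : g x = f x := by
      calc g x = g (g (f x)) := by rw [hgf]
      _ = f x := hg1 _
    exact this.symm
  · exact (key x h').symm

lemma toM_surj {n : ℕ} {m : Finset (ℕ × ℕ)} (hm : m ∈ matchSet (Finset.range n)) :
    ∃ f : Fin n → Fin n, (∀ x, f (f x) = x) ∧ (∀ x, f x ≠ x) ∧ toM n f = m := by
  have hex : ∀ x : Fin n, ∃ y : Fin n,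
      (x.val < y.val ∧ (x.val, y.val) ∈ m) ∨ (y.val < x.val ∧ (y.val, x.val) ∈ m) := by
    intro x
    obtain ⟨p, ⟨hp, hpx⟩, -⟩ := unique_pair hm (mem_range.mpr x.isLt)
    obtain ⟨hlt, h1, h2⟩ := (mem_matchSet.mp hm).1 p hp
    rcases hpx with h | h
    · refine ⟨⟨p.2, mem_range.mp h2⟩, Or.inl ⟨?_, ?_⟩⟩
      · show x.val < p.2
        omega
      show (x.val, p.2) ∈ m
      rw [← h]
      exact hp
    · refine ⟨⟨p.1, mem_range.mp h1⟩, Or.inr ⟨?_, ?_⟩⟩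
      · show p.1 < x.val
        omega
      show (p.1, x.val) ∈ m
      rw [← h]
      exact hp
  choose g hg using hex
  have uniq : ∀ (x : ℕ) (p q : ℕ × ℕ), p ∈ m → q ∈ m → (p.1 = x ∨ p.2 = x) →
      (q.1 = x ∨ q.2 = x) → p = q := by
    intro x p q hp hq h1 h2
    have hpr : x ∈ Finset.range n := by
      obtain ⟨-, u1, u2⟩ := (mem_matchSet.mp hm).1 p hp
      rcases h1 with h | h <;> exact h ▸ (by assumption)
    obtain ⟨r, -, hr⟩ := unique_pair hm hpr
    exact (hr p ⟨hp, h1⟩).trans (hr q ⟨hq, h2⟩).symm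
  have hinv : ∀ x, g (g x) = x := by
    intro x
    rcases hg x with ⟨h1, h2⟩ | ⟨h1, h2⟩
    · rcases hg (g x) with ⟨u1, u2⟩ | ⟨u1, u2⟩
      · have := uniq (g x).val _ _ h2 u2 (Or.inr rfl) (Or.inl rfl)
        injection this with a b
        omega
      · have := uniq (g x).val _ _ h2 u2 (Or.inr rfl) (Or.inr rfl)
        injection this with a b
        exact Fin.ext a.symm
    · rcases hg (g x) with ⟨u1, u2⟩ | ⟨u1, u2⟩
      · have := uniq (g x).val _ _ h2 u2 (Or.inl rfl) (Or.inl rfl)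
        injection this with a b
        exact Fin.ext b.symm
      · have := uniq (g x).val _ _ h2 u2 (Or.inl rfl) (Or.inr rfl)
        injection this with a b
        omega
  have hnofix : ∀ x, g x ≠ x := by
    intro x h
    rcases hg x with ⟨h1, -⟩ | ⟨h1, -⟩ <;> (rw [h] at h1; omega)
  refine ⟨g, hinv, hnofix, ?_⟩
  ext p
  constructor
  · intro hp
    obtain ⟨x, hx, rfl⟩ := mem_toM.mp hp
    rw [Fin.lt_def] at hx
    rcases hg x with ⟨h1, h2⟩ | ⟨h1, h2⟩
    · exact h2
    · omega
  · intro hp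
    obtain ⟨hlt, h1, h2⟩ := (mem_matchSet.mp hm).1 p hp
    set x : Fin n := ⟨p.1, mem_range.mp h1⟩ with hx
    rcases hg x with ⟨u1, u2⟩ | ⟨u1, u2⟩
    · have heq := uniq p.1 _ p u2 hp (Or.inl rfl) (Or.inl rfl)
      exact mem_toM.mpr ⟨x, Fin.lt_def.mpr u1, heq⟩
    · have heq := uniq p.1 _ p u2 hp (Or.inr rfl) (Or.inl rfl)
      have e1 : (g x).val = p.1 := congrArg Prod.fst heq
      have e2 : x.val = p.1 := rfl
      omega

lemma card_fun_eq (n : ℕ) :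
    (Finset.univ.filter fun f : Fin n → Fin n =>
      (∀ x, f (f x) = x) ∧ (∀ x, f x ≠ x)).card = (matchSet (Finset.range n)).card := by
  refine Finset.card_bij (fun f _ => toM n f) ?_ ?_ ?_
  · intro f hf
    obtain ⟨h1, h2⟩ := (mem_filter.mp hf).2
    exact toM_mem h1 h2
  · intro f hf g hg h
    obtain ⟨hf1, hf2⟩ := (mem_filter.mp hf).2
    obtain ⟨hg1, hg2⟩ := (mem_filter.mp hg).2
    exact toM_inj hf1 hf2 hg1 hg2 h
  · intro m hm
    obtain ⟨f, h1, h2, h3⟩ := toM_surj hm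
    exact ⟨f, mem_filter.mpr ⟨mem_univ _, h1, h2⟩, h3⟩

lemma card_fun_nc_eq (n : ℕ) :
    (Finset.univ.filter fun f : Fin n → Fin n =>
      (∀ x, f (f x) = x) ∧ (∀ x, f x ≠ x) ∧
      ¬∃ a b : Fin n, a < b ∧ b < f a ∧ f a < f b).card = (ncSet (Finset.range n)).card := by
  refine Finset.card_bij (fun f _ => toM n f) ?_ ?_ ?_
  · intro f hf
    obtain ⟨h1, h2, h3⟩ := (mem_filter.mp hf).2
    exact mem_ncSet.mpr ⟨toM_mem h1 h2, fun hc => h3 ((toM_cross h1 h2).mpr hc)⟩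
  · intro f hf g hg h
    obtain ⟨hf1, hf2, -⟩ := (mem_filter.mp hf).2
    obtain ⟨hg1, hg2, -⟩ := (mem_filter.mp hg).2
    exact toM_inj hf1 hf2 hg1 hg2 h
  · intro m hm
    obtain ⟨hm', hnc⟩ := mem_ncSet.mp hm
    obtain ⟨f, h1, h2, h3⟩ := toM_surj hm'
    refine ⟨f, mem_filter.mpr ⟨mem_univ _, h1, h2, fun hc => hnc ?_⟩, h3⟩
    rw [← h3]
    exact (toM_cross h1 h2).mp hc

lemma key_identity : ∀ k : ℕ, catalan k * Nat.factorial (k + 1) = 2 ^ k * T k := by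
  intro k
  induction k with
  | zero => simp [T]
  | succ k ih =>
    have hstep : (k + 2) * catalan (k + 1) = 2 * (2 * k + 1) * catalan k := by
      have h1 : (k + 1 + 1) * catalan (k + 1) = (k + 1).centralBinom :=
        succ_mul_catalan_eq_centralBinom (k + 1)
      have h2 : (k + 1) * (k + 1).centralBinom = 2 * (2 * k + 1) * k.centralBinom :=
        Nat.succ_mul_centralBinom_succ k
      have h3 : (k + 1) * catalan k = k.centralBinom := succ_mul_catalan_eq_centralBinom k
      have h4 : (k + 1) * ((k + 2) * catalan (k + 1))
          = (k + 1) * (2 * (2 * k + 1) * catalan k) := by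
        calc (k + 1) * ((k + 2) * catalan (k + 1)) = (k + 1) * (k + 1).centralBinom := by
              rw [← h1]
        _ = 2 * (2 * k + 1) * k.centralBinom := h2
        _ = 2 * (2 * k + 1) * ((k + 1) * catalan k) := by rw [h3]
        _ = (k + 1) * (2 * (2 * k + 1) * catalan k) := by ring
      exact Nat.eq_of_mul_eq_mul_left (by omega) h4
    have hfac : Nat.factorial (k + 2) = (k + 2) * Nat.factorial (k + 1) := rfl
    calc catalan (k + 1) * Nat.factorial (k + 2)
        = (k + 2) * catalan (k + 1) * Nat.factorial (k + 1) := by rw [hfac]; ring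
    _ = 2 * (2 * k + 1) * catalan k * Nat.factorial (k + 1) := by rw [hstep]
    _ = 2 * (2 * k + 1) * (catalan k * Nat.factorial (k + 1)) := by ring
    _ = 2 * (2 * k + 1) * (2 ^ k * T k) := by rw [ih]
    _ = 2 ^ (k + 1) * ((2 * k + 1) * T k) := by ring
    _ = 2 ^ (k + 1) * T (k + 1) := rfl

theorem prob_no_interleaved_repeats (k : ℕ) :
    ((Finset.univ.filter fun f : Fin (2 * k) → Fin (2 * k) =>
        (∀ x, f (f x) = x) ∧ (∀ x, f x ≠ x) ∧
        ¬∃ a b : Fin (2 * k), a < b ∧ b < f a ∧ f a < f b).card : ℚ) /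
      ((Finset.univ.filter fun f : Fin (2 * k) → Fin (2 * k) =>
        (∀ x, f (f x) = x) ∧ (∀ x, f x ≠ x)).card : ℚ)
      = 2 ^ k / (Nat.factorial (k + 1) : ℚ) := by
  rw [card_fun_nc_eq (2 * k), card_fun_eq (2 * k),
    card_matchSet k (Finset.range (2 * k)) (card_range _),
    card_ncSet k (Finset.range (2 * k)) (card_range _)]
  rw [div_eq_div_iff (by exact_mod_cast (T_pos k).ne') (by
    exact_mod_cast (Nat.factorial_pos (k + 1)).ne')]
  push_cast
  exact_mod_cast congrArg (fun x : ℕ => (x : ℚ)) (key_identity k)
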